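/- arXiv:1906.01469 — 2 statements merged into one kernel-verified Lean document; each statement's English description precedes it below -/
import Mathlib

section
/- The positive type-B Birkhoff polytope B_+(n) := conv{M_σ : σ ∈ B_n} ∩ ℝ^{n×n}_{≥0} equals the matching polytope of the complete bipartite graph K_{n,n}, i.e., the convex hull of the 0/1 matrices with at most one 1 in each row and each column (partial permutation matrices). -/
open Finset

/-- A sign vector. -/
def IsSignVec {n : ℕ} (σ : Fin n → ℝ) : Prop := ∀ i, σ i = 1 ∨ σ i = -1

/-- The signed permutation matrix associated to a permutation `π` and a sign
vector `ε`: entry `(i, π i)` equals `ε i`, all other entries vanish. -/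
def signedPermMatrix {n : ℕ} (π : Equiv.Perm (Fin n)) (ε : Fin n → ℝ) :
    Fin n → Fin n → ℝ :=
  fun i j => if j = π i then ε i else 0

/-- The set of signed permutation matrices (the matrices `M_σ`, `σ ∈ B_n`). -/
def signedPermMatrices (n : ℕ) : Set (Fin n → Fin n → ℝ) :=
  {M | ∃ (π : Equiv.Perm (Fin n)) (ε : Fin n → ℝ), IsSignVec ε ∧ M = signedPermMatrix π ε}

/-- The type-B (signed) Birkhoff polytope: the convex hull of all signed
permutation matrices. -/
def BB (n : ℕ) : Set (Fin n → Fin n → ℝ) := convexHull ℝ (signedPermMatrices n)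

/-- A partial permutation matrix: a `0/1` matrix with at most one `1` in each
row and in each column. -/
def IsPartialPermMatrix {n : ℕ} (M : Fin n → Fin n → ℝ) : Prop :=
  (∀ i j, M i j = 0 ∨ M i j = 1) ∧
  (∀ i j j', M i j = 1 → M i j' = 1 → j = j') ∧
  (∀ j i i', M i j = 1 → M i' j = 1 → i = i')

/-! ### Auxiliary material -/

/-- The linear map scaling entry `p` of a matrix by `t`. -/
def scaleEntry {n : ℕ} (p : Fin n × Fin n) (t : ℝ) :
    (Fin n → Fin n → ℝ) →ₗ[ℝ] (Fin n → Fin n → ℝ) where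
  toFun M := fun i j => if (i, j) = p then t * M i j else M i j
  map_add' M N := by
    funext i j
    by_cases h : (i, j) = p <;> simp [h, mul_add]
  map_smul' c M := by
    funext i j
    by_cases h : (i, j) = p <;> simp [h] <;> ring

lemma scaleEntry_apply {n : ℕ} (p : Fin n × Fin n) (t : ℝ) (M : Fin n → Fin n → ℝ)
    (i j : Fin n) : scaleEntry p t M i j = if (i, j) = p then t * M i j else M i j := rfl

/-- If an affine scaling maps generators into the hull, it maps the hull into itself. -/
lemma scale_hull_mem {n : ℕ} {s : Set (Fin n → Fin n → ℝ)} (p : Fin n × Fin n) (t : ℝ)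
    (h : ∀ M ∈ s, scaleEntry p t M ∈ convexHull ℝ s) :
    ∀ x ∈ convexHull ℝ s, scaleEntry p t x ∈ convexHull ℝ s := by
  intro x hx
  have h1 : scaleEntry p t x ∈ (scaleEntry p t) '' (convexHull ℝ s) := ⟨x, hx, rfl⟩
  rw [LinearMap.image_convexHull] at h1
  have h2 : (scaleEntry p t) '' s ⊆ convexHull ℝ s := by
    rintro _ ⟨M, hM, rfl⟩; exact h M hM
  have := convexHull_mono h2 h1
  rwa [(convex_convexHull ℝ s).convexHull_eq] at this

lemma two_mem_hull {n : ℕ} {s : Set (Fin n → Fin n → ℝ)} {a b : Fin n → Fin n → ℝ}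
    (ha : a ∈ s) (hb : b ∈ s) {u v : ℝ} (hu : 0 ≤ u) (hv : 0 ≤ v) (huv : u + v = 1) :
    u • a + v • b ∈ convexHull ℝ s :=
  (convex_convexHull ℝ s) (subset_convexHull ℝ s ha) (subset_convexHull ℝ s hb) hu hv huv

/-- `BB n` is stable under scaling one entry by `s ∈ [-1, 1]`. -/
lemma BB_scale {n : ℕ} (p : Fin n × Fin n) {t : ℝ} (ht : -1 ≤ t) (ht' : t ≤ 1) :
    ∀ x ∈ BB n, scaleEntry p t x ∈ BB n := by
  apply scale_hull_mem
  rintro M ⟨π, ε, hε, rfl⟩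
  obtain ⟨i0, j0⟩ := p
  by_cases hj : j0 = π i0
  · -- M' flips the sign at row i0
    set ε' : Fin n → ℝ := Function.update ε i0 (-ε i0) with hε'
    have hε'sv : IsSignVec ε' := by
      intro i
      by_cases hi : i = i0
      · subst hi
        rcases hε i with h | h <;> simp [hε', h]
      · simp [hε', Function.update_of_ne hi]
        exact hε i
    have key : scaleEntry (i0, j0) t (signedPermMatrix π ε)
        = ((1 + t) / 2) • signedPermMatrix π ε + ((1 - t) / 2) • signedPermMatrix π ε' := by
      funext i j
      simp only [scaleEntry_apply, Pi.add_apply, Pi.smul_apply, smul_eq_mul,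
        signedPermMatrix]
      by_cases hij : (i, j) = (i0, j0)
      · have hi : i = i0 := congrArg Prod.fst hij
        have hjj : j = j0 := congrArg Prod.snd hij
        subst hi; subst hjj
        have hup : ε' i = -ε i := Function.update_self i (-ε i) ε
        rw [if_pos rfl, if_pos hj, if_pos hj, hup]
        ring
      · rw [if_neg hij]
        by_cases hji : j = π i
        · have hi : i ≠ i0 := by
            rintro rfl
            apply hij
            rw [hji, hj]
          simp only [if_pos hji, hε', Function.update_of_ne hi]
          ring
        · simp [hji]
    rw [key]
    have hm1 : signedPermMatrix π ε ∈ signedPermMatrices n := ⟨π, ε, hε, rfl⟩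
    have hm2 : signedPermMatrix π ε' ∈ signedPermMatrices n := ⟨π, ε', hε'sv, rfl⟩
    exact two_mem_hull hm1 hm2 (by linarith) (by linarith) (by ring)
  · -- the scaled entry is zero; nothing changes
    have key : scaleEntry (i0, j0) t (signedPermMatrix π ε) = signedPermMatrix π ε := by
      funext i j
      simp only [scaleEntry_apply, signedPermMatrix]
      by_cases hij : (i, j) = (i0, j0)
      · have hi : i = i0 := congrArg Prod.fst hij
        have hjj : j = j0 := congrArg Prod.snd hij
        subst hi; subst hjj
        rw [if_pos rfl, if_neg hj, mul_zero]
      · simp [hij]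
    rw [key]
    exact subset_convexHull ℝ _ ⟨π, ε, hε, rfl⟩

/-- The matching polytope is stable under scaling one entry by `t ∈ [0, 1]`. -/
lemma PPM_scale {n : ℕ} (p : Fin n × Fin n) {t : ℝ} (ht : 0 ≤ t) (ht' : t ≤ 1) :
    ∀ x ∈ convexHull ℝ {M : Fin n → Fin n → ℝ | IsPartialPermMatrix M},
      scaleEntry p t x ∈ convexHull ℝ {M : Fin n → Fin n → ℝ | IsPartialPermMatrix M} := by
  apply scale_hull_mem
  intro M hM
  obtain ⟨h01, hrow, hcol⟩ := hM
  set M' : Fin n → Fin n → ℝ := fun i j => if (i, j) = p then 0 else M i j with hM'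
  have hM'p : IsPartialPermMatrix M' := by
    refine ⟨fun i j => ?_, fun i j j' h1 h2 => ?_, fun j i i' h1 h2 => ?_⟩
    · by_cases h : (i, j) = p <;> simp [hM', h]
      exact h01 i j
    · have e1 : M i j = 1 := by
        by_cases h : (i, j) = p
        · simp [hM', h] at h1
        · simpa [hM', h] using h1
      have e2 : M i j' = 1 := by
        by_cases h : (i, j') = p
        · simp [hM', h] at h2
        · simpa [hM', h] using h2
      exact hrow i j j' e1 e2
    · have e1 : M i j = 1 := by
        by_cases h : (i, j) = p
        · simp [hM', h] at h1
        · simpa [hM', h] using h1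
      have e2 : M i' j = 1 := by
        by_cases h : (i', j) = p
        · simp [hM', h] at h2
        · simpa [hM', h] using h2
      exact hcol j i i' e1 e2
  have key : scaleEntry p t M = t • M + (1 - t) • M' := by
    funext i j
    simp only [scaleEntry_apply, Pi.add_apply, Pi.smul_apply, smul_eq_mul, hM']
    by_cases h : (i, j) = p <;> simp [h] <;> ring
  rw [key]
  have hm1 : M ∈ {M : Fin n → Fin n → ℝ | IsPartialPermMatrix M} := ⟨h01, hrow, hcol⟩
  have hm2 : M' ∈ {M : Fin n → Fin n → ℝ | IsPartialPermMatrix M} := hM'p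
  exact two_mem_hull hm1 hm2 ht (by linarith) (by ring)

/-- Down-closure of the matching polytope inside the nonnegative orthant. -/
lemma PPM_down_closed {n : ℕ} {x y : Fin n → Fin n → ℝ}
    (hx : ∀ i j, 0 ≤ x i j) (hxy : ∀ i j, x i j ≤ y i j)
    (hy : y ∈ convexHull ℝ {M : Fin n → Fin n → ℝ | IsPartialPermMatrix M}) :
    x ∈ convexHull ℝ {M : Fin n → Fin n → ℝ | IsPartialPermMatrix M} := by
  classical
  have key : ∀ F : Finset (Fin n × Fin n),
      (fun i j => if (i, j) ∈ F then x i j else y i j)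
        ∈ convexHull ℝ {M : Fin n → Fin n → ℝ | IsPartialPermMatrix M} := by
    intro F
    induction F using Finset.induction_on with
    | empty => simpa using hy
    | @insert p F hp ih =>
      obtain ⟨a, b⟩ := p
      set t : ℝ := if y a b = 0 then 0 else x a b / y a b with htdef
      have hyab : 0 ≤ y a b := le_trans (hx a b) (hxy a b)
      have ht0 : 0 ≤ t := by
        rw [htdef]
        split
        · exact le_refl 0
        · exact div_nonneg (hx a b) hyab
      have ht1 : t ≤ 1 := by
        rw [htdef]
        split
        · exact zero_le_one
        · exact div_le_one_of_le₀ (hxy a b) hyab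
      have heq : (fun i j => if (i, j) ∈ insert (a, b) F then x i j else y i j)
          = scaleEntry (a, b) t (fun i j => if (i, j) ∈ F then x i j else y i j) := by
        funext i j
        simp only [scaleEntry_apply]
        by_cases hij : ((i, j) : Fin n × Fin n) = (a, b)
        · have hi : i = a := congrArg Prod.fst hij
          have hjj : j = b := congrArg Prod.snd hij
          subst hi; subst hjj
          have hiF : ((i, j) : Fin n × Fin n) ∉ F := hp
          rw [if_pos (Finset.mem_insert_self _ _), if_pos rfl, if_neg hiF]
          by_cases h0 : y i j = 0
          · have hx0 : x i j = 0 := le_antisymm (h0 ▸ hxy i j) (hx i j)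
            rw [htdef, if_pos h0, hx0, zero_mul]
          · rw [htdef, if_neg h0, div_mul_cancel₀ _ h0]
        · rw [if_neg hij]
          by_cases hF : ((i, j) : Fin n × Fin n) ∈ F
          · rw [if_pos hF, if_pos (Finset.mem_insert_of_mem hF)]
          · rw [if_neg hF, if_neg (by simp [Finset.mem_insert, hij, hF])]
      rw [heq]
      exact PPM_scale (a, b) ht0 ht1 _ ih
  have := key Finset.univ
  simpa using this

/-- Every partial permutation matrix lies in `BB n`. -/
lemma PPM_subset_BB {n : ℕ} {M : Fin n → Fin n → ℝ} (hM : IsPartialPermMatrix M) :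
    M ∈ BB n := by
  classical
  obtain ⟨h01, hrow, hcol⟩ := hM
  -- the rows containing a one
  set P : Fin n → Prop := fun i => ∃ j, M i j = 1 with hP
  set Q : Fin n → Prop := fun j => ∃ i, M i j = 1 with hQ
  have hPd : DecidablePred P := fun i => Fintype.decidableExistsFintype
  have hQd : DecidablePred Q := fun j => Fintype.decidableExistsFintype
  -- the bijection between matched rows and matched columns
  set f : {i // P i} → {j // Q j} := fun i =>
    ⟨Classical.choose i.2, ⟨i.1, Classical.choose_spec i.2⟩⟩ with hf
  have hfspec : ∀ i : {i // P i}, M i.1 (f i).1 = 1 := fun i => Classical.choose_spec i.2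
  have hfbij : Function.Bijective f := by
    constructor
    · intro i i' h
      have h1 := hfspec i
      have h2 := hfspec i'
      rw [h] at h1
      exact Subtype.ext (hcol (f i').1 i.1 i'.1 h1 h2)
    · rintro ⟨j, i, hij⟩
      refine ⟨⟨i, ⟨j, hij⟩⟩, ?_⟩
      have := hfspec ⟨i, ⟨j, hij⟩⟩
      exact Subtype.ext (hrow i _ j this hij)
  set e : {i // P i} ≃ {j // Q j} := Equiv.ofBijective f hfbij with he
  set π : Equiv.Perm (Fin n) := @Equiv.extendSubtype (Fin n) P Q hPd hQd _ e with hπ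
  have hπspec : ∀ i, P i → M i (π i) = 1 := by
    intro i hi
    have : π i = (e ⟨i, hi⟩).1 := @Equiv.extendSubtype_apply_of_mem (Fin n) P Q hPd hQd _ e i hi
    rw [this]
    exact hfspec ⟨i, hi⟩
  -- zero out the rows in T
  have key : ∀ T : Finset (Fin n),
      (fun i j => if j = π i ∧ i ∉ T then (1 : ℝ) else 0) ∈ BB n := by
    intro T
    induction T using Finset.induction_on with
    | empty =>
      apply subset_convexHull
      refine ⟨π, fun _ => 1, fun i => Or.inl rfl, ?_⟩
      funext i j
      simp [signedPermMatrix]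
    | @insert a T ha ih =>
      have heq : (fun i j => if j = π i ∧ i ∉ insert a T then (1 : ℝ) else 0)
          = scaleEntry (a, π a) 0 (fun i j => if j = π i ∧ i ∉ T then (1 : ℝ) else 0) := by
        funext i j
        simp only [scaleEntry_apply, zero_mul]
        by_cases hij : ((i, j) : Fin n × Fin n) = (a, π a)
        · have hi : i = a := congrArg Prod.fst hij
          have hjj : j = π a := congrArg Prod.snd hij
          subst hi; subst hjj
          rw [if_pos rfl]
          simp [Finset.mem_insert]
        · rw [if_neg hij]
          by_cases hji : j = π i
          · subst hji
            have hia : i ≠ a := by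
              rintro rfl; exact hij rfl
            simp [Finset.mem_insert, hia]
          · simp [hji]
      rw [heq]
      exact BB_scale (a, π a) (by norm_num) (by norm_num) _ ih
  have hMeq : M = (fun i j =>
      if j = π i ∧ i ∉ (Finset.univ.filter fun i => ¬ P i) then (1 : ℝ) else 0) := by
    funext i j
    by_cases hPi : P i
    · by_cases hji : j = π i
      · subst hji
        have hiT : i ∉ Finset.univ.filter fun i => ¬ P i := by simp [hPi]
        rw [if_pos ⟨rfl, hiT⟩]
        exact hπspec i hPi
      · have : M i j = 0 := by
          rcases h01 i j with h | h
          · exact h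
          · exact absurd (hrow i j (π i) h (hπspec i hPi)) hji
        simp [hji, this]
    · have : M i j = 0 := by
        rcases h01 i j with h | h
        · exact h
        · exact absurd ⟨j, h⟩ hPi
      rw [this]
      have : i ∈ Finset.univ.filter fun i => ¬ P i := by simpa using hPi
      simp [this]
  rw [hMeq]
  exact key _

lemma signedPermMatrix_le {n : ℕ} (π : Equiv.Perm (Fin n)) {ε : Fin n → ℝ}
    (hε : IsSignVec ε) (i j : Fin n) :
    signedPermMatrix π ε i j ≤ signedPermMatrix π (fun _ => 1) i j := by
  simp only [signedPermMatrix]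
  by_cases h : j = π i
  · rw [if_pos h, if_pos h]
    rcases hε i with h' | h' <;> rw [h'] <;> norm_num
  · rw [if_neg h, if_neg h]

lemma fullPerm_isPPM {n : ℕ} (π : Equiv.Perm (Fin n)) :
    IsPartialPermMatrix (signedPermMatrix π fun _ => (1 : ℝ)) := by
  refine ⟨fun i j => ?_, fun i j j' h1 h2 => ?_, fun j i i' h1 h2 => ?_⟩
  · by_cases h : j = π i <;> simp [signedPermMatrix, h]
  · simp only [signedPermMatrix] at h1 h2
    by_cases hj : j = π i
    · by_cases hj' : j' = π i
      · rw [hj, hj']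
      · rw [if_neg hj'] at h2
        exact absurd h2 (by norm_num)
    · rw [if_neg hj] at h1
      exact absurd h1 (by norm_num)
  · simp only [signedPermMatrix] at h1 h2
    by_cases hj : j = π i
    · by_cases hj' : j = π i'
      · exact π.injective (hj.symm.trans hj')
      · rw [if_neg hj'] at h2
        exact absurd h2 (by norm_num)
    · rw [if_neg hj] at h1
      exact absurd h1 (by norm_num)

/-- the positive type-B Birkhoff polytope `BB(n) ∩ ℝ^{n×n}_{≥0}`
is the matching polytope of `K_{n,n}`, i.e. the convex hull of partial
permutation matrices. -/
theorem stmt15 (n : ℕ) :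
    BB n ∩ {M | ∀ i j, 0 ≤ M i j} =
      convexHull ℝ {M : Fin n → Fin n → ℝ | IsPartialPermMatrix M} := by
  apply Set.Subset.antisymm
  · -- ⊆ : a nonnegative point of BB n is dominated by a convex combination of
    -- permutation matrices, then use down-closure
    rintro x ⟨hxBB, hxpos⟩
    rw [BB, _root_.convexHull_eq] at hxBB
    obtain ⟨ι, t, w, z, hw0, hw1, hz, hcm⟩ := hxBB
    -- the permutation underlying each signed permutation matrix
    have hz' : ∀ k ∈ t, ∃ (π : Equiv.Perm (Fin n)) (ε : Fin n → ℝ),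
        IsSignVec ε ∧ z k = signedPermMatrix π ε := hz
    classical
    set π : ι → Equiv.Perm (Fin n) := fun k =>
      if h : k ∈ t then (hz' k h).choose else 1 with hπdef
    set z' : ι → Fin n → Fin n → ℝ := fun k => signedPermMatrix (π k) fun _ => 1 with hz'def
    set y : Fin n → Fin n → ℝ := ∑ k ∈ t, w k • z' k with hydef
    have hy : y ∈ convexHull ℝ {M : Fin n → Fin n → ℝ | IsPartialPermMatrix M} := by
      have := Finset.centerMass_mem_convexHull (s := {M : Fin n → Fin n → ℝ | IsPartialPermMatrix M}) (z := z') t hw0 (by rw [hw1]; norm_num)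
        (fun k _ => (fullPerm_isPPM (π k) : z' k ∈ {M : Fin n → Fin n → ℝ | IsPartialPermMatrix M}))
      rwa [Finset.centerMass_eq_of_sum_1 _ _ hw1] at this
    have hxsum : x = ∑ k ∈ t, w k • z k := by
      rw [← hcm, Finset.centerMass_eq_of_sum_1 _ _ hw1]
    have hdom : ∀ i j, x i j ≤ y i j := by
      intro i j
      rw [hxsum, hydef]
      have e1 : (∑ k ∈ t, w k • z k) i j = ∑ k ∈ t, w k * z k i j := by
        rw [Finset.sum_apply]
        simp [Finset.sum_apply]
      have e2 : (∑ k ∈ t, w k • z' k) i j = ∑ k ∈ t, w k * z' k i j := by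
        rw [Finset.sum_apply]
        simp [Finset.sum_apply]
      rw [e1, e2]
      apply Finset.sum_le_sum
      intro k hk
      apply mul_le_mul_of_nonneg_left _ (hw0 k hk)
      have hzk : z k = signedPermMatrix (π k) (hz' k hk).choose_spec.choose := by
        have h := (hz' k hk).choose_spec.choose_spec.2
        rw [hπdef]
        simp only [dif_pos hk]
        exact h
      have hεk : IsSignVec (hz' k hk).choose_spec.choose :=
        (hz' k hk).choose_spec.choose_spec.1
      have hzk' : z' k = signedPermMatrix (π k) fun _ => 1 := by rw [hz'def]
      rw [hzk, hzk']
      exact signedPermMatrix_le (π k) hεk i j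
    exact PPM_down_closed hxpos hdom hy
  · -- ⊇ : generators are in both sets, and the intersection is convex
    apply convexHull_min
    · intro M hM
      constructor
      · exact PPM_subset_BB hM
      · intro i j
        rcases hM.1 i j with h | h <;> rw [h] <;> norm_num
    · apply Convex.inter (convex_convexHull ℝ _)
      intro a ha b hb u v hu hv huv
      intro i j
      have := ha i j
      have := hb i j
      simp only [Pi.add_apply, Pi.smul_apply, smul_eq_mul]
      positivity
end

section
/- The type-B Birkhoff polytope BB(n) = conv{M_σ : σ ∈ B_n} ⊂ ℝ^{n×n} is a reflexive polytope: its facet-defining inequalities are ⟨A, σ ⊗ e_i⟩ ≤ 1 and ⟨A, e_i ⊗ σ⟩ ≤ 1 for i = 1,...,n and σ ∈ {−1,+1}^n, where (u ⊗ v)_{jk} = u_j v_k and ⟨·,·⟩ is the Frobenius inner product. -/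
open Finset

/-- Frobenius inner product of two `n × n` matrices. -/
def dotM {n : ℕ} (A B : Fin n → Fin n → ℝ) : ℝ := ∑ i, ∑ j, A i j * B i j

/-- Rank-one tensor `(u ⊗ v)_{jk} = u_j v_k`. -/
def tensor {n : ℕ} (u v : Fin n → ℝ) : Fin n → Fin n → ℝ := fun j k => u j * v k

/-- Reflexivity for lattice polytopes in matrix space: `0` is interior and the
polytope is cut out by integral inequalities with right-hand side `1`. -/
def IsReflexiveM {n : ℕ} (P : Set (Fin n → Fin n → ℝ)) : Prop :=
  0 ∈ interior P ∧
    ∃ A : Finset (Fin n → Fin n → ℤ),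
      P = {x | ∀ a ∈ A, dotM (fun i j => ((a i j : ℤ) : ℝ)) x ≤ 1}

namespace Stmt17

variable {n : ℕ}


def Qset (n : ℕ) : Set (Fin n → Fin n → ℝ) :=
  {A | ∀ i : Fin n, (∑ j, |A j i|) ≤ 1 ∧ (∑ j, |A i j|) ≤ 1}

lemma dotM_tensor_right (A : Fin n → Fin n → ℝ) (σ : Fin n → ℝ) (i : Fin n) :
    dotM A (tensor σ (Pi.single i 1)) = ∑ j, A j i * σ j := by
  unfold dotM tensor
  refine Finset.sum_congr rfl fun j _ => ?_
  simp [Pi.single_apply, mul_ite, mul_comm, mul_left_comm]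

lemma dotM_tensor_left (A : Fin n → Fin n → ℝ) (σ : Fin n → ℝ) (i : Fin n) :
    dotM A (tensor (Pi.single i 1) σ) = ∑ k, A i k * σ k := by
  unfold dotM tensor
  rw [Finset.sum_eq_single i]
  · refine Finset.sum_congr rfl fun k _ => by simp [Pi.single_apply]
  · intro b _ hb
    simp [Pi.single_apply, hb]
  · simp

/-- The theorem's facet description set equals `Qset`. -/
lemma rhs_eq_Qset :
    {A : Fin n → Fin n → ℝ | ∀ i : Fin n, ∀ σ : Fin n → ℝ, IsSignVec σ →
        dotM A (tensor σ (Pi.single i 1)) ≤ 1 ∧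
        dotM A (tensor (Pi.single i 1) σ) ≤ 1} = Qset n := by
  classical
  ext A
  constructor
  · intro h i
    constructor
    · have := (h i (fun j => if 0 ≤ A j i then 1 else -1)
        (fun j => by by_cases hj : 0 ≤ A j i <;> simp [hj])).1
      rw [dotM_tensor_right] at this
      refine le_trans (le_of_eq ?_) this
      refine Finset.sum_congr rfl fun j _ => ?_
      by_cases hj : 0 ≤ A j i
      · simp [hj, abs_of_nonneg hj]
      · rw [abs_of_neg (lt_of_not_ge hj)]; simp [hj]
    · have := (h i (fun k => if 0 ≤ A i k then 1 else -1)
        (fun k => by by_cases hk : 0 ≤ A i k <;> simp [hk])).2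
      rw [dotM_tensor_left] at this
      refine le_trans (le_of_eq ?_) this
      refine Finset.sum_congr rfl fun k _ => ?_
      by_cases hk : 0 ≤ A i k
      · simp [hk, abs_of_nonneg hk]
      · rw [abs_of_neg (lt_of_not_ge hk)]; simp [hk]
  · intro h i σ hσ
    have habs : ∀ j, |σ j| = 1 := fun j => by rcases hσ j with h' | h' <;> simp [h']
    constructor
    · rw [dotM_tensor_right]
      calc (∑ j, A j i * σ j) ≤ ∑ j, |A j i| := by
            refine Finset.sum_le_sum fun j _ => ?_
            calc A j i * σ j ≤ |A j i * σ j| := le_abs_self _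
              _ = |A j i| := by rw [abs_mul, habs j, mul_one]
        _ ≤ 1 := (h i).1
    · rw [dotM_tensor_left]
      calc (∑ k, A i k * σ k) ≤ ∑ k, |A i k| := by
            refine Finset.sum_le_sum fun k _ => ?_
            calc A i k * σ k ≤ |A i k * σ k| := le_abs_self _
              _ = |A i k| := by rw [abs_mul, habs k, mul_one]
        _ ≤ 1 := (h i).2

lemma sum_abs_combo {g h : Fin n → ℝ} {a b : ℝ} (ha : 0 ≤ a) (hb : 0 ≤ b)
    (hab : a + b = 1) (hg : (∑ j, |g j|) ≤ 1) (hh : (∑ j, |h j|) ≤ 1) :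
    (∑ j, |a * g j + b * h j|) ≤ 1 := by
  have step1 : (∑ j, |a * g j + b * h j|) ≤ ∑ j, (a * |g j| + b * |h j|) := by
    refine Finset.sum_le_sum fun j _ => ?_
    calc |a * g j + b * h j| ≤ |a * g j| + |b * h j| := abs_add_le _ _
      _ = a * |g j| + b * |h j| := by
          rw [abs_mul, abs_mul, abs_of_nonneg ha, abs_of_nonneg hb]
  have step2 : (∑ j, (a * |g j| + b * |h j|)) ≤ 1 := by
    rw [Finset.sum_add_distrib, ← Finset.mul_sum, ← Finset.mul_sum]
    calc a * (∑ j, |g j|) + b * ∑ j, |h j| ≤ a * 1 + b * 1 := by gcongr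
      _ = 1 := by rw [mul_one, mul_one, hab]
  exact le_trans step1 step2

lemma convex_Qset : Convex ℝ (Qset n) := by
  intro A hA B hB a b ha hb hab i
  have hco : ∀ x y : Fin n, (a • A + b • B) x y = a * A x y + b * B x y := by
    intro x y; simp
  constructor
  · rw [Finset.sum_congr rfl fun j (_ : j ∈ Finset.univ) => congrArg abs (hco j i)]
    exact sum_abs_combo ha hb hab (hA i).1 (hB i).1
  · rw [Finset.sum_congr rfl fun j (_ : j ∈ Finset.univ) => congrArg abs (hco i j)]
    exact sum_abs_combo ha hb hab (hA i).2 (hB i).2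

lemma spm_subset_Qset : signedPermMatrices n ⊆ Qset n := by
  classical
  rintro M ⟨π, ε, hε, rfl⟩ i
  have habs : ∀ j, |ε j| = 1 := fun j => by rcases hε j with h | h <;> simp [h]
  constructor
  · have : ∀ j, |signedPermMatrix π ε j i| = if i = π j then 1 else 0 := by
      intro j
      unfold signedPermMatrix
      split <;> simp [habs]
    rw [Finset.sum_congr rfl fun j _ => this j]
    rw [Finset.sum_eq_single (π.symm i)]
    · simp
    · intro b _ hb
      rw [if_neg fun h => hb (by rw [h, Equiv.symm_apply_apply])]
    · simp
  · have : ∀ j, |signedPermMatrix π ε i j| = if j = π i then 1 else 0 := by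
      intro j
      unfold signedPermMatrix
      split <;> simp [habs]
    rw [Finset.sum_congr rfl fun j _ => this j]
    rw [Finset.sum_ite_eq' Finset.univ (π i)]
    simp

lemma BB_subset_Qset : BB n ⊆ Qset n :=
  convexHull_min spm_subset_Qset convex_Qset

lemma zero_mem_interior_Qset : (0 : Fin n → Fin n → ℝ) ∈ interior (Qset n) := by
  have hball : Metric.ball (0 : Fin n → Fin n → ℝ) (1 / (n + 1)) ⊆ Qset n := by
    intro A hA
    rw [Metric.mem_ball, dist_zero_right] at hA
    have hentry : ∀ i j : Fin n, |A i j| < 1 / (n + 1) := by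
      intro i j
      calc |A i j| = ‖A i j‖ := rfl
        _ ≤ ‖A i‖ := norm_le_pi_norm (A i) j
        _ ≤ ‖A‖ := norm_le_pi_norm A i
        _ < 1 / (n + 1) := hA
    intro i
    have hkey : ∀ g : Fin n → ℝ, (∀ j, |g j| < 1/(n+1)) → ∑ j, |g j| ≤ 1 := by
      intro g hg
      calc (∑ j, |g j|) ≤ ∑ _j : Fin n, 1/(n+1 : ℝ) :=
            Finset.sum_le_sum fun j _ => le_of_lt (hg j)
        _ = n * (1/(n+1 : ℝ)) := by rw [Finset.sum_const]; simp [mul_comm]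
        _ ≤ 1 := by
            rw [mul_one_div, div_le_one (by positivity)]
            linarith
    exact ⟨hkey _ (fun j => hentry j i), hkey _ (fun j => hentry i j)⟩
  have h0 : (0 : Fin n → Fin n → ℝ) ∈ Metric.ball (0 : Fin n → Fin n → ℝ) (1 / (n + 1)) := by
    simp [Metric.mem_ball]
    positivity
  exact interior_maximal hball Metric.isOpen_ball h0



lemma permMatrix_apply {α : Type*} [Fintype α] [DecidableEq α] (τ : Equiv.Perm α) (x y : α) :
    τ.permMatrix ℝ x y = if τ x = y then 1 else 0 := by
  simp [Equiv.Perm.permMatrix, PEquiv.toMatrix_apply, Equiv.toPEquiv_apply]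

lemma exists_perm_extend {α : Type*} [DecidableEq α] (s : Finset α) (f : α → α)
    (hf : Set.InjOn f s) : ∃ π : Equiv.Perm α, ∀ i ∈ s, π i = f i := by
  induction s using Finset.cons_induction with
  | empty => exact ⟨1, by simp⟩
  | cons a t ha ih =>
    obtain ⟨π, hπ⟩ := ih (hf.mono (by simp [Finset.coe_cons, Set.subset_insert]))
    refine ⟨Equiv.swap (f a) (π a) * π, ?_⟩
    intro i hi
    rcases Finset.mem_cons.1 hi with rfl | hi
    · simp [Equiv.Perm.mul_apply, Equiv.swap_apply_right]
    · have h1 : f i ≠ f a := by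
        intro h
        have : i = a := hf (by simp [hi]) (by simp) h
        exact ha (this ▸ hi)
      have h2 : f i ≠ π a := by
        intro h
        have : i = a := π.injective (by rw [hπ i hi, h])
        exact ha (this ▸ hi)
      simp [Equiv.Perm.mul_apply, hπ i hi, Equiv.swap_apply_of_ne_of_ne h1 h2]

lemma key (B C : Fin n → Fin n → ℝ) (hB0 : ∀ i j, 0 ≤ B i j)
    (hBr : ∀ i, ∑ j, B i j ≤ 1) (hBc : ∀ j, ∑ i, B i j ≤ 1)
    (hC0 : ∀ i j, 0 ≤ C i j) :
    ∃ π : Equiv.Perm (Fin n), (∑ i, ∑ j, C i j * B i j) ≤ ∑ i, C i (π i) := by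
  classical
  let D : Matrix (Fin n ⊕ Fin n) (Fin n ⊕ Fin n) ℝ := fun x y =>
    match x, y with
    | .inl i, .inl j => B i j
    | .inl i, .inr j => if i = j then 1 - ∑ k, B i k else 0
    | .inr i, .inl j => if i = j then 1 - ∑ k, B k j else 0
    | .inr i, .inr j => B j i
  have hD : D ∈ doublyStochastic ℝ (Fin n ⊕ Fin n) := by
    rw [mem_doublyStochastic_iff_sum]
    refine ⟨?_, ?_, ?_⟩
    · rintro (i | i) (j | j)
      · exact hB0 i j
      · dsimp only [D]; split
        · linarith [hBr i]
        · exact le_refl 0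
      · dsimp only [D]; split
        · linarith [hBc j]
        · exact le_refl 0
      · exact hB0 j i
    · rintro (i | i) <;> rw [Fintype.sum_sum_type] <;> dsimp only [D] <;>
        rw [Finset.sum_ite_eq Finset.univ i] <;> simp
    · rintro (j | j) <;> rw [Fintype.sum_sum_type] <;> dsimp only [D] <;>
        rw [Finset.sum_ite_eq' Finset.univ j] <;> simp
  obtain ⟨w, hw0, hw1, hwD⟩ := exists_eq_sum_perm_of_mem_doublyStochastic hD
  -- bound the value of the functional on each permutation matrix
  obtain ⟨π₀, -, hπ₀⟩ := Finset.exists_max_image (Finset.univ : Finset (Equiv.Perm (Fin n)))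
    (fun π => ∑ i, C i (π i)) ⟨1, Finset.mem_univ 1⟩
  have hbound : ∀ τ : Equiv.Perm (Fin n ⊕ Fin n),
      (∑ i, ∑ j, C i j * τ.permMatrix ℝ (.inl i) (.inl j)) ≤ ∑ i, C i (π₀ i) := by
    intro τ
    set s : Finset (Fin n) := Finset.univ.filter (fun i => (τ (.inl i)).isLeft) with hs
    set f : Fin n → Fin n := fun i => Sum.elim id (fun _ => i) (τ (.inl i)) with hf
    have hfs : ∀ i ∈ s, τ (.inl i) = .inl (f i) := by
      intro i hi
      rcases h : τ (.inl i) with j | j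
      · simp [hf, h]
      · simp [hs, Finset.mem_filter, h] at hi
    have hinj : Set.InjOn f s := by
      intro x hx y hy hxy
      have : τ (.inl x) = τ (.inl y) := by
        rw [hfs x hx, hfs y hy, hxy]
      simpa using τ.injective this
    obtain ⟨π, hπ⟩ := exists_perm_extend s f hinj
    have step : ∀ i, (∑ j, C i j * τ.permMatrix ℝ (.inl i) (.inl j)) ≤ C i (π i) := by
      intro i
      by_cases hi : i ∈ s
      · have : ∀ j, C i j * τ.permMatrix ℝ (.inl i) (.inl j)
            = if j = f i then C i j else 0 := by
          intro j
          rw [permMatrix_apply, hfs i hi]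
          rcases eq_or_ne j (f i) with h | h
          · simp [h]
          · simp [h, Ne.symm h]
        rw [Finset.sum_congr rfl (fun j _ => this j), Finset.sum_ite_eq' Finset.univ (f i)]
        simp [hπ i hi]
      · have : ∀ j, C i j * τ.permMatrix ℝ (.inl i) (.inl j) = 0 := by
          intro j
          rw [permMatrix_apply]
          rcases h : τ (.inl i) with k | k
          · exact absurd (by simp [hs, Finset.mem_filter, h]) hi
          · simp [h]
        rw [Finset.sum_congr rfl (fun j _ => this j)]
        simpa using hC0 i (π i)
    calc (∑ i, ∑ j, C i j * τ.permMatrix ℝ (.inl i) (.inl j))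
        ≤ ∑ i, C i (π i) := Finset.sum_le_sum (fun i _ => step i)
      _ ≤ ∑ i, C i (π₀ i) := hπ₀ π (Finset.mem_univ π)
  refine ⟨π₀, ?_⟩
  have hDB : ∀ i j, B i j = D (.inl i) (.inl j) := fun i j => rfl
  calc (∑ i, ∑ j, C i j * B i j)
      = ∑ i, ∑ j, C i j * (∑ τ, w τ • τ.permMatrix ℝ) (.inl i) (.inl j) := by
        rw [hwD]
    _ = ∑ i, ∑ τ, ∑ j, C i j * (w τ * τ.permMatrix ℝ (.inl i) (.inl j)) := by
        simp only [Matrix.sum_apply, Matrix.smul_apply, smul_eq_mul, Finset.mul_sum]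
        exact Finset.sum_congr rfl fun i _ => Finset.sum_comm
    _ = ∑ τ, ∑ i, ∑ j, C i j * (w τ * τ.permMatrix ℝ (.inl i) (.inl j)) := Finset.sum_comm
    _ = ∑ τ, w τ * ∑ i, ∑ j, C i j * τ.permMatrix ℝ (.inl i) (.inl j) := by
        refine Finset.sum_congr rfl fun τ _ => ?_
        rw [Finset.mul_sum]
        refine Finset.sum_congr rfl fun i _ => ?_
        rw [Finset.mul_sum]
        exact Finset.sum_congr rfl fun j _ => by ring
    _ ≤ ∑ τ, w τ * ∑ i, C i (π₀ i) := by
        refine Finset.sum_le_sum fun τ _ => mul_le_mul_of_nonneg_left (hbound τ) (hw0 τ)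
    _ = ∑ i, C i (π₀ i) := by rw [← Finset.sum_mul, hw1, one_mul]

lemma finite_spm : (signedPermMatrices n).Finite := by
  classical
  have h1 : ({f : Fin n → ℝ | ∀ j, f j ∈ ({1, 0, -1} : Set ℝ)}).Finite := by
    have := Set.Finite.pi (fun _ : Fin n => (Set.finite_singleton (-1 : ℝ)).insert 0 |>.insert 1)
    refine this.subset ?_
    intro f hf
    rw [Set.mem_univ_pi]
    intro j
    rcases hf j with h | h | h <;> simp [h]
  have h2 : ({M : Fin n → Fin n → ℝ | ∀ i j, M i j ∈ ({1, 0, -1} : Set ℝ)}).Finite := by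
    have := Set.Finite.pi (fun _ : Fin n => h1)
    refine this.subset ?_
    intro M hM
    rw [Set.mem_univ_pi]
    exact fun i => hM i
  refine h2.subset ?_
  rintro M ⟨π, ε, hε, rfl⟩ i j
  unfold signedPermMatrix
  split
  · rcases hε i with h | h <;> simp [h]
  · simp

-- the separation argument
lemma Qset_subset_BB : Qset n ⊆ BB n := by
  classical
  intro A hA
  by_contra hA'
  obtain ⟨f, u, h1, h2⟩ := geometric_hahn_banach_closed_point
    (convex_convexHull ℝ _) (finite_spm.isClosed_convexHull (𝕜 := ℝ)) hA'
  set Y : Fin n → Fin n → ℝ := fun i j => f (Pi.single i (Pi.single j 1)) with hY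
  have hrep : ∀ x : Fin n → Fin n → ℝ, f x = ∑ i, ∑ j, x i j * Y i j := by
    intro x
    have hx : x = ∑ i, ∑ j, x i j • (Pi.single i (Pi.single j 1) : Fin n → Fin n → ℝ) := by
      funext a b
      simp only [Finset.sum_apply, Pi.smul_apply, Pi.single_apply, smul_eq_mul,
        mul_ite, mul_one, mul_zero]
      rw [Finset.sum_eq_single a]
      · simp [Pi.single_apply, Finset.sum_ite_eq]
      · intro c _ hc
        simp [Ne.symm hc]
      · simp
    conv_lhs => rw [hx]
    rw [map_sum]
    refine Finset.sum_congr rfl fun i _ => ?_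
    rw [map_sum]
    refine Finset.sum_congr rfl fun j _ => ?_
    rw [map_smul, smul_eq_mul]
  obtain ⟨π, hπ⟩ := key (fun i j => |A i j|) (fun i j => |Y i j|)
    (fun i j => abs_nonneg _) (fun i => (hA i).2) (fun j => (hA j).1)
    (fun i j => abs_nonneg _)
  set ε : Fin n → ℝ := fun i => if 0 ≤ Y i (π i) then 1 else -1 with hε
  have hεsv : IsSignVec ε := by
    intro i
    by_cases h : 0 ≤ Y i (π i) <;> simp [hε, h]
  have hM : signedPermMatrix π ε ∈ BB n :=
    subset_convexHull ℝ _ ⟨π, ε, hεsv, rfl⟩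
  have hfM : f (signedPermMatrix π ε) = ∑ i, |Y i (π i)| := by
    rw [hrep]
    refine Finset.sum_congr rfl fun i _ => ?_
    have : ∀ j, signedPermMatrix π ε i j * Y i j
        = if j = π i then ε i * Y i j else 0 := by
      intro j
      unfold signedPermMatrix
      split <;> simp
    rw [Finset.sum_congr rfl fun j _ => this j, Finset.sum_ite_eq' Finset.univ (π i)]
    simp only [Finset.mem_univ, if_true]
    by_cases h : 0 ≤ Y i (π i)
    · rw [hε]; simp [h, abs_of_nonneg h]
    · rw [hε]; simp only [h, if_false]
      rw [abs_of_neg (lt_of_not_ge h)]; ring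
  have hfA : f A ≤ f (signedPermMatrix π ε) := by
    rw [hrep A, hfM]
    calc (∑ i, ∑ j, A i j * Y i j)
        ≤ ∑ i, ∑ j, |Y i j| * |A i j| := by
          refine Finset.sum_le_sum fun i _ => Finset.sum_le_sum fun j _ => ?_
          rw [mul_comm (|Y i j|)]
          calc A i j * Y i j ≤ |A i j * Y i j| := le_abs_self _
            _ = |A i j| * |Y i j| := abs_mul _ _
      _ ≤ ∑ i, |Y i (π i)| := hπ
  exact absurd (h1 _ hM) (not_lt.2 (le_trans (le_of_lt h2) hfA))



lemma dotM_comm (A B : Fin n → Fin n → ℝ) : dotM A B = dotM B A := by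
  unfold dotM
  exact Finset.sum_congr rfl fun i _ => Finset.sum_congr rfl fun j _ => mul_comm _ _

/-- integer facet normals -/
def intIneq (n : ℕ) : Bool × Fin n × (Fin n → Bool) → (Fin n → Fin n → ℤ) :=
  fun p j k =>
    if p.1 then (if k = p.2.1 then (if p.2.2 j then 1 else -1) else 0)
    else (if j = p.2.1 then (if p.2.2 k then 1 else -1) else 0)

lemma cast_intIneq_true (i : Fin n) (s : Fin n → Bool) :
    (fun j k => ((intIneq n (true, i, s) j k : ℤ) : ℝ))
      = tensor (fun j => if s j then 1 else -1) (Pi.single i 1) := by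
  funext j k
  unfold intIneq tensor
  simp only [Pi.single_apply]
  split_ifs <;> simp_all

lemma cast_intIneq_false (i : Fin n) (s : Fin n → Bool) :
    (fun j k => ((intIneq n (false, i, s) j k : ℤ) : ℝ))
      = tensor (Pi.single i 1) (fun k => if s k then 1 else -1) := by
  funext j k
  unfold intIneq tensor
  simp only [Pi.single_apply]
  split_ifs <;> simp_all

lemma isSignVec_ite (s : Fin n → Bool) :
    IsSignVec (fun j => if s j then (1 : ℝ) else -1) := by
  intro j; cases h : s j <;> simp [h]

lemma ineq_eq_rhs :
    {x : Fin n → Fin n → ℝ |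
        ∀ a ∈ Finset.image (intIneq n) Finset.univ,
          dotM (fun i j => ((a i j : ℤ) : ℝ)) x ≤ 1}
      = {A : Fin n → Fin n → ℝ | ∀ i : Fin n, ∀ σ : Fin n → ℝ, IsSignVec σ →
          dotM A (tensor σ (Pi.single i 1)) ≤ 1 ∧
          dotM A (tensor (Pi.single i 1) σ) ≤ 1} := by
  ext x
  constructor
  · intro h i σ hσ
    have hex : ∀ j, ∃ b : Bool, σ j = if b then (1:ℝ) else -1 :=
      fun j => (hσ j).elim (fun h' => ⟨true, by simp [h']⟩) (fun h' => ⟨false, by simp [h']⟩)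
    choose s hs using hex
    have hσs : σ = fun j => if s j then (1:ℝ) else -1 := funext hs
    constructor
    · have := h (intIneq n (true, i, s)) (Finset.mem_image_of_mem _ (Finset.mem_univ _))
      rw [cast_intIneq_true, dotM_comm] at this
      rw [hσs]
      exact this
    · have := h (intIneq n (false, i, s)) (Finset.mem_image_of_mem _ (Finset.mem_univ _))
      rw [cast_intIneq_false, dotM_comm] at this
      rw [hσs]
      exact this
  · intro hx a ha
    obtain ⟨⟨b, i, s⟩, -, rfl⟩ := Finset.mem_image.1 ha
    cases b
    · rw [cast_intIneq_false, dotM_comm]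
      exact (hx i _ (isSignVec_ite s)).2
    · rw [cast_intIneq_true, dotM_comm]
      exact (hx i _ (isSignVec_ite s)).1


end Stmt17

/-- the type-B Birkhoff polytope is reflexive, with
facet-defining inequalities `⟨A, σ ⊗ e_i⟩ ≤ 1` and `⟨A, e_i ⊗ σ⟩ ≤ 1` for
`i ∈ [n]` and sign vectors `σ`. -/
theorem stmt17 (n : ℕ) :
    IsReflexiveM (BB n) ∧
      BB n = {A | ∀ i : Fin n, ∀ σ : Fin n → ℝ, IsSignVec σ →
        dotM A (tensor σ (Pi.single i 1)) ≤ 1 ∧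
        dotM A (tensor (Pi.single i 1) σ) ≤ 1} := by
  have hQ : BB n = Stmt17.Qset n :=
    Set.Subset.antisymm Stmt17.BB_subset_Qset Stmt17.Qset_subset_BB
  constructor
  · constructor
    · rw [hQ]
      exact Stmt17.zero_mem_interior_Qset
    · refine ⟨Finset.image (Stmt17.intIneq n) Finset.univ, ?_⟩
      rw [hQ, ← Stmt17.rhs_eq_Qset, ← Stmt17.ineq_eq_rhs]
  · rw [hQ, ← Stmt17.rhs_eq_Qset]
end
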